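/- If a mixed polynomial f : ℂⁿ → ℂ is Newton non-degenerate, then for every bad face Δ of supp(f)‾ the truncation f_Δ is Newton non-degenerate. -/

import Mathlib

open Complex Filter Finset

noncomputable section

abbrev MixedCoeff (n : ℕ) := ((Fin n → ℕ) × (Fin n → ℕ)) →₀ ℂ

namespace Mixed

variable {n : ℕ}

/-- Evaluation of a mixed polynomial given by its coefficient function `c`:
`f(z) = Σ c(ν,μ) zᵛ z̄ᵘ`. -/
def eval (c : MixedCoeff n) (z : Fin n → ℂ) : ℂ :=
  c.sum fun p a => a * (∏ i, z i ^ p.1 i) * ∏ i, (starRingEnd ℂ) (z i) ^ p.2 i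

/-- `∂f/∂z_i` evaluated at `(z, z̄)`. -/
def dz (c : MixedCoeff n) (i : Fin n) (z : Fin n → ℂ) : ℂ :=
  c.sum fun p a => a * (p.1 i) * (∏ j, z j ^ (p.1 j - if j = i then 1 else 0)) *
    ∏ j, (starRingEnd ℂ) (z j) ^ p.2 j

/-- `∂f/∂z̄_i` evaluated at `(z, z̄)`. -/
def dzbar (c : MixedCoeff n) (i : Fin n) (z : Fin n → ℂ) : ℂ :=
  c.sum fun p a => a * (p.2 i) * (∏ j, z j ^ p.1 j) *
    ∏ j, (starRingEnd ℂ) (z j) ^ (p.2 j - if j = i then 1 else 0)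

/-- The singular locus of `f` as a real map `ℝ²ⁿ → ℝ²`. -/
def Sing (c : MixedCoeff n) : Set (Fin n → ℂ) :=
  {z | ¬ Function.Surjective ⇑(fderiv ℝ (eval c) z)}

/-- The Milnor set `M(f)`. -/
def Milnor (c : MixedCoeff n) : Set (Fin n → ℂ) :=
  {z | ∃ (l : ℝ) (m : ℂ), m ≠ 0 ∧
    ∀ i, (l : ℂ) * z i = m * (starRingEnd ℂ) (dz c i z) + (starRingEnd ℂ) m * dzbar c i z}

/-- The set `S(f)` of asymptotic ρ-nonregular values. -/
def Sset (c : MixedCoeff n) : Set ℂ :=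
  {v | ∃ zk : ℕ → (Fin n → ℂ), (∀ k, zk k ∈ Milnor c) ∧
    Tendsto (fun k => ‖zk k‖) atTop atTop ∧
    Tendsto (fun k => eval c (zk k)) atTop (nhds v)}

/-- The point of `ℝⁿ` attached to the exponent pair `(ν,μ)`, namely `ν+μ`. -/
def suppPt (p : (Fin n → ℕ) × (Fin n → ℕ)) : Fin n → ℝ := fun i => ((p.1 i + p.2 i : ℕ) : ℝ)

/-- The support of `f`, as a subset of `ℝⁿ`. -/
def suppPts (c : MixedCoeff n) : Set (Fin n → ℝ) := suppPt '' (c.support : Set _)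

/-- The Newton polyhedron `Γ₀(f)`: convex hull of `{0} ∪ supp(f)`. -/
def Gamma0 (c : MixedCoeff n) : Set (Fin n → ℝ) := convexHull ℝ (insert 0 (suppPts c))

/-- `supp(f)‾`: the convex hull of `supp(f) \ {0}`. -/
def suppBar (c : MixedCoeff n) : Set (Fin n → ℝ) := convexHull ℝ (suppPts c \ {0})

/-- `F` is a face of the (compact convex) set `C`: either `C` itself or the set of
minimizers on `C` of a linear functional, and nonempty. -/
def IsFaceOf (C F : Set (Fin n → ℝ)) : Prop :=
  F.Nonempty ∧ (F = C ∨ ∃ a : Fin n → ℝ,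
    F = {x ∈ C | ∀ y ∈ C, ∑ i, a i * x i ≤ ∑ i, a i * y i})

/-- `Δ` is a face of the Newton boundary at infinity `Γ⁺(f)`: a face of `Γ₀(f)` not
containing the origin. -/
def IsGammaPlusFace (c : MixedCoeff n) (Δ : Set (Fin n → ℝ)) : Prop :=
  IsFaceOf (Gamma0 c) Δ ∧ (0 : Fin n → ℝ) ∉ Δ

/-- `Γ⁺(f)` as a subset of `ℝⁿ`: the union of the faces of `Γ₀(f)` not containing `0`. -/
def GammaPlusSet (c : MixedCoeff n) : Set (Fin n → ℝ) :=
  {x | ∃ Δ, IsGammaPlusFace c Δ ∧ x ∈ Δ}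

/-- The truncation `f_Δ` of `f` to a subset `Δ ⊆ ℝⁿ`. -/
def trunc (c : MixedCoeff n) (Δ : Set (Fin n → ℝ)) : MixedCoeff n :=
  @Finsupp.filter _ _ _ (fun p => suppPt p ∈ Δ) (Classical.decPred _) c

/-- Newton non-degeneracy: for every face `Δ` of `Γ⁺(f)`,
`Sing f_Δ ∩ f_Δ⁻¹(0) ∩ (ℂ*)ⁿ = ∅`. -/
def NewtonNonDeg (c : MixedCoeff n) : Prop :=
  ∀ Δ, IsGammaPlusFace c Δ → ∀ z : Fin n → ℂ, (∀ i, z i ≠ 0) →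
    eval (trunc c Δ) z = 0 → z ∉ Sing (trunc c Δ)

/-- Newton strong non-degeneracy: for every face `Δ` of `Γ⁺(f)`,
`Sing f_Δ ∩ (ℂ*)ⁿ = ∅`. -/
def NewtonStronglyNonDeg (c : MixedCoeff n) : Prop :=
  ∀ Δ, IsGammaPlusFace c Δ → ∀ z : Fin n → ℂ, (∀ i, z i ≠ 0) →
    z ∉ Sing (trunc c Δ)

/-- `Δ` is a bad face of `supp(f)‾`. -/
def IsBadFace (c : MixedCoeff n) (Δ : Set (Fin n → ℝ)) : Prop :=
  IsFaceOf (suppBar c) Δ ∧ (0 : Fin n → ℝ) ∈ affineSpan ℝ Δ ∧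
    ∃ a : Fin n → ℝ, (∃ i, a i < 0) ∧ (∃ j, 0 < a j) ∧
      {x ∈ suppBar c | ∑ i, a i * x i = 0} = Δ

/-- `f` depends effectively on all its variables. -/
def EffectiveAll (c : MixedCoeff n) : Prop :=
  ∀ i, ∃ p ∈ c.support, 0 < p.1 i + p.2 i

/-- The Euclidean norm on `ℂⁿ`. -/
def norm2 (v : Fin n → ℂ) : ℝ := Real.sqrt (∑ i, Complex.normSq (v i))

end Mixed

noncomputable section
namespace MixedAux

variable {n : ℕ}

def lf (a : Fin n → ℝ) : (Fin n → ℝ) →ₗ[ℝ] ℝ where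
  toFun x := ∑ i, a i * x i
  map_add' x y := by simp [mul_add, Finset.sum_add_distrib]
  map_smul' r x := by
    simp only [RingHom.id_apply, Pi.smul_apply, smul_eq_mul, Finset.mul_sum]
    exact Finset.sum_congr rfl fun i _ => by ring

lemma lf_apply (a x : Fin n → ℝ) : lf a x = ∑ i, a i * x i := rfl

lemma exists_le_hull {t : Set (Fin n → ℝ)} {x : Fin n → ℝ} (a : Fin n → ℝ)
    (hx : x ∈ convexHull ℝ t) : ∃ y ∈ t, lf a y ≤ lf a x :=
  ((lf a).concaveOn convex_univ).exists_le_of_mem_convexHull (Set.subset_univ t) hx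

lemma const_on_affineSpan {Δ : Set (Fin n → ℝ)} {a : Fin n → ℝ} {r : ℝ}
    (h : ∀ x ∈ Δ, lf a x = r) (h0 : (0 : Fin n → ℝ) ∈ affineSpan ℝ Δ) : r = 0 := by
  have hsub : Δ ⊆ (AffineSubspace.comap (lf a).toAffineMap
      (AffineSubspace.mk' r (⊥ : Submodule ℝ ℝ)) : Set (Fin n → ℝ)) := by
    intro x hx
    simp [AffineSubspace.mem_comap, AffineSubspace.mem_mk',
      LinearMap.coe_toAffineMap, sub_eq_zero, h x hx]
  have h2 := (affineSpan_le.2 hsub) h0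
  rw [AffineSubspace.mem_comap,
    AffineSubspace.mem_mk'] at h2
  have h3 : (0:ℝ) - r = 0 := by simpa using h2
  linarith

lemma trunc_apply (d : MixedCoeff n) (E : Set (Fin n → ℝ))
    (p : (Fin n → ℕ) × (Fin n → ℕ)) :
    Mixed.trunc d E p =
      @ite _ (Mixed.suppPt p ∈ E) (Classical.decPred (fun q => Mixed.suppPt q ∈ E) p)
        (d p) 0 := rfl

lemma mem_support_trunc (d : MixedCoeff n) (E : Set (Fin n → ℝ))
    (p : (Fin n → ℕ) × (Fin n → ℕ)) :
    p ∈ (Mixed.trunc d E).support ↔ d p ≠ 0 ∧ Mixed.suppPt p ∈ E := by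
  constructor
  · intro hp
    have h1 := Finsupp.mem_support_iff.1 hp
    rw [trunc_apply] at h1
    by_cases h : Mixed.suppPt p ∈ E
    · rw [if_pos h] at h1; exact ⟨h1, h⟩
    · rw [if_neg h] at h1; exact absurd rfl h1
  · rintro ⟨h1, h2⟩
    refine Finsupp.mem_support_iff.2 ?_
    rw [trunc_apply, if_pos h2]
    exact h1

lemma suppPts_trunc (d : MixedCoeff n) (E : Set (Fin n → ℝ)) :
    Mixed.suppPts (Mixed.trunc d E) = Mixed.suppPts d ∩ E := by
  ext x
  simp only [Mixed.suppPts, Set.mem_image, Set.mem_inter_iff]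
  constructor
  · rintro ⟨p, hp, rfl⟩
    rw [Finset.mem_coe, mem_support_trunc] at hp
    exact ⟨⟨p, Finset.mem_coe.2 (Finsupp.mem_support_iff.2 hp.1), rfl⟩, hp.2⟩
  · rintro ⟨⟨p, hp, rfl⟩, hE⟩
    exact ⟨p, Finset.mem_coe.2 ((mem_support_trunc d E p).2
      ⟨Finsupp.mem_support_iff.1 (Finset.mem_coe.1 hp), hE⟩), rfl⟩

end MixedAux

theorem trunc_nondeg_of_badFace' {n : ℕ} (c : MixedCoeff n)
    (hnd : Mixed.NewtonNonDeg c) :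
    ∀ Δ : Set (Fin n → ℝ), Mixed.IsBadFace c Δ → Mixed.NewtonNonDeg (Mixed.trunc c Δ) := by
  classical
  intro Δ hbad
  obtain ⟨⟨hne, hfc⟩, hspan, a, -, -, haset⟩ := hbad
  -- Step 1: a supporting functional `g` for the bad face, vanishing at the origin.
  obtain ⟨g, hg0, hgiff⟩ :
      ∃ g : Fin n → ℝ, (∀ x ∈ Mixed.suppBar c, 0 ≤ MixedAux.lf g x) ∧
        (∀ x ∈ Mixed.suppBar c, (MixedAux.lf g x = 0 ↔ x ∈ Δ)) := by
    rcases hfc with hΔC | ⟨g, hgdef⟩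
    · have hzero : ∀ x ∈ Mixed.suppBar c, MixedAux.lf a x = 0 := by
        intro x hx
        have hxΔ : x ∈ Δ := by rw [hΔC]; exact hx
        rw [← haset] at hxΔ
        exact hxΔ.2
      exact ⟨a, fun x hx => le_of_eq (hzero x hx).symm,
        fun x hx => ⟨fun _ => by rw [hΔC]; exact hx, fun _ => hzero x hx⟩⟩
    · obtain ⟨x₁, hx₁⟩ := hne
      rw [hgdef] at hx₁
      have hx₁1 : x₁ ∈ Mixed.suppBar c := hx₁.1
      have hx₁2 : ∀ y ∈ Mixed.suppBar c, MixedAux.lf g x₁ ≤ MixedAux.lf g y := hx₁.2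
      have hconst : ∀ x ∈ Δ, MixedAux.lf g x = MixedAux.lf g x₁ := by
        intro x hx
        rw [hgdef] at hx
        exact le_antisymm (hx.2 x₁ hx₁1) (hx₁2 x hx.1)
      have hlam0 : MixedAux.lf g x₁ = 0 := MixedAux.const_on_affineSpan hconst hspan
      refine ⟨g, fun x hx => ?_, fun x hx => ⟨fun h0 => ?_, fun hxΔ => ?_⟩⟩
      · rw [← hlam0]; exact hx₁2 x hx
      · rw [hgdef]
        refine ⟨hx, fun y hy => ?_⟩
        have h1 : MixedAux.lf g x₁ ≤ MixedAux.lf g y := hx₁2 y hy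
        have h2 : (MixedAux.lf g) x = 0 := h0
        show MixedAux.lf g x ≤ MixedAux.lf g y
        rw [h2, ← hlam0]; exact h1
      · rw [hconst x hxΔ, hlam0]
  -- Step 2: main argument
  intro Δ' hΔ' z hz heval
  obtain ⟨⟨⟨x₀, hx₀⟩, hfc'⟩, h0'⟩ := hΔ'
  have h0mem : (0 : Fin n → ℝ) ∈ Mixed.Gamma0 (Mixed.trunc c Δ) :=
    subset_convexHull ℝ _ (Set.mem_insert _ _)
  rcases hfc' with hC | ⟨b, hbdef⟩
  · rw [hC] at h0'
    exact absurd h0mem h0'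
  subst hbdef
  have hx₀1 : x₀ ∈ Mixed.Gamma0 (Mixed.trunc c Δ) := hx₀.1
  have hx₀2 : ∀ y ∈ Mixed.Gamma0 (Mixed.trunc c Δ), MixedAux.lf b x₀ ≤ MixedAux.lf b y := hx₀.2
  set m : ℝ := MixedAux.lf b x₀ with hm
  have hb0 : MixedAux.lf b (0 : Fin n → ℝ) = 0 := map_zero _
  have hmneg : m < 0 := by
    have hm0 : m ≤ 0 := by
      have := hx₀2 0 h0mem
      rwa [hb0] at this
    rcases lt_or_eq_of_le hm0 with h | h
    · exact h
    · refine absurd ?_ h0'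
      refine ⟨h0mem, fun y hy => ?_⟩
      show MixedAux.lf b 0 ≤ MixedAux.lf b y
      rw [hb0, ← h]
      exact hx₀2 y hy
  have hsuppBar : ∀ u, u ∈ Mixed.suppPts c → u ≠ 0 → u ∈ Mixed.suppBar c := by
    intro u hu hu0
    exact subset_convexHull ℝ _ ⟨hu, hu0⟩
  have hub : ∀ u, u ∈ Mixed.suppPts c → u ∈ Δ → u ∈ Mixed.Gamma0 (Mixed.trunc c Δ) := by
    intro u hu huΔ
    refine subset_convexHull ℝ _ (Set.mem_insert_iff.2 (Or.inr ?_))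
    rw [MixedAux.suppPts_trunc]
    exact ⟨hu, huΔ⟩
  -- choose t
  set t : ℝ := 1 + ∑ p ∈ c.support,
      max 0 ((m - MixedAux.lf b (Mixed.suppPt p)) / MixedAux.lf g (Mixed.suppPt p)) with htdef
  have htb : ∀ p ∈ c.support,
      (m - MixedAux.lf b (Mixed.suppPt p)) / MixedAux.lf g (Mixed.suppPt p) < t := by
    intro p hp
    have h1 : max 0 ((m - MixedAux.lf b (Mixed.suppPt p)) / MixedAux.lf g (Mixed.suppPt p)) ≤
        ∑ q ∈ c.support,
          max 0 ((m - MixedAux.lf b (Mixed.suppPt q)) / MixedAux.lf g (Mixed.suppPt q)) :=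
      Finset.single_le_sum (f := fun q => max 0
        ((m - MixedAux.lf b (Mixed.suppPt q)) / MixedAux.lf g (Mixed.suppPt q)))
        (fun q _ => le_max_left _ _) hp
    have h2 := le_max_right (0:ℝ)
      ((m - MixedAux.lf b (Mixed.suppPt p)) / MixedAux.lf g (Mixed.suppPt p))
    rw [htdef]; linarith
  set hv : Fin n → ℝ := fun i => b i + t * g i with hhv
  have hlf : ∀ x : Fin n → ℝ, MixedAux.lf hv x = MixedAux.lf b x + t * MixedAux.lf g x := by
    intro x
    simp only [MixedAux.lf_apply, hhv, Finset.mul_sum]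
    rw [← Finset.sum_add_distrib]
    exact Finset.sum_congr rfl fun i _ => by ring
  -- generator bound
  have hgen : ∀ u ∈ insert (0 : Fin n → ℝ) (Mixed.suppPts c),
      m ≤ MixedAux.lf hv u ∧ (MixedAux.lf hv u ≤ m → u ∈ Δ ∧ MixedAux.lf b u = m) := by
    intro u hu
    have hz0 : MixedAux.lf hv (0 : Fin n → ℝ) = 0 := map_zero _
    by_cases hu0 : u = 0
    · subst hu0
      rw [hz0]
      exact ⟨le_of_lt hmneg, fun h => absurd (lt_of_le_of_lt h hmneg) (lt_irrefl _)⟩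
    have huS : u ∈ Mixed.suppPts c := (Set.mem_insert_iff.1 hu).resolve_left hu0
    have huB : u ∈ Mixed.suppBar c := hsuppBar u huS hu0
    rcases lt_or_eq_of_le (hg0 u huB) with hgpos | hgz
    · obtain ⟨p, hp, hpu⟩ := huS
      have hplt := htb p hp
      rw [hpu] at hplt
      have hlt2 : m - MixedAux.lf b u < t * MixedAux.lf g u := (div_lt_iff₀ hgpos).1 hplt
      have hlt : m < MixedAux.lf hv u := by rw [hlf]; linarith
      exact ⟨le_of_lt hlt, fun h => absurd (lt_of_lt_of_le hlt h) (lt_irrefl _)⟩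
    · have huΔ : u ∈ Δ := (hgiff u huB).1 hgz.symm
      have huΓ : u ∈ Mixed.Gamma0 (Mixed.trunc c Δ) := hub u huS huΔ
      have hBu : m ≤ MixedAux.lf b u := hx₀2 u huΓ
      have heq : MixedAux.lf hv u = MixedAux.lf b u := by rw [hlf, ← hgz]; ring
      rw [heq]
      exact ⟨hBu, fun h => ⟨huΔ, le_antisymm h hBu⟩⟩
  have hmin : ∀ y ∈ Mixed.Gamma0 c, m ≤ MixedAux.lf hv y := by
    intro y hy
    rw [Mixed.Gamma0] at hy
    obtain ⟨u, hu, hle⟩ := MixedAux.exists_le_hull hv hy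
    exact le_trans (hgen u hu).1 hle
  -- the vertex u₀
  have hx₀hull : x₀ ∈ convexHull ℝ (insert 0 (Mixed.suppPts (Mixed.trunc c Δ))) := hx₀1
  obtain ⟨u₀, hu₀mem, hu₀le⟩ := MixedAux.exists_le_hull b hx₀hull
  have hu₀0 : u₀ ≠ 0 := by
    intro h; rw [h, hb0] at hu₀le; exact absurd (lt_of_lt_of_le hmneg hu₀le) (lt_irrefl _)
  have hu₀S : u₀ ∈ Mixed.suppPts c ∩ Δ := by
    rw [← MixedAux.suppPts_trunc]
    exact (Set.mem_insert_iff.1 hu₀mem).resolve_left hu₀0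
  have hu₀Γ' : u₀ ∈ Mixed.Gamma0 (Mixed.trunc c Δ) := hub u₀ hu₀S.1 hu₀S.2
  have hu₀B : MixedAux.lf b u₀ = m := le_antisymm hu₀le (hx₀2 u₀ hu₀Γ')
  have hu₀G : MixedAux.lf g u₀ = 0 := (hgiff u₀ (hsuppBar u₀ hu₀S.1 hu₀0)).2 hu₀S.2
  have hu₀h : MixedAux.lf hv u₀ = m := by rw [hlf, hu₀G, hu₀B]; ring
  -- the face Δ''
  set Δ'' : Set (Fin n → ℝ) := {x ∈ Mixed.Gamma0 c |
      ∀ y ∈ Mixed.Gamma0 c, ∑ i, hv i * x i ≤ ∑ i, hv i * y i} with hΔ''def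
  have hmemΔ'' : ∀ x : Fin n → ℝ, x ∈ Δ'' ↔ (x ∈ Mixed.Gamma0 c ∧
      ∀ y ∈ Mixed.Gamma0 c, MixedAux.lf hv x ≤ MixedAux.lf hv y) := fun x => Iff.rfl
  have hSsubΓ : ∀ u, u ∈ Mixed.suppPts c → u ∈ Mixed.Gamma0 c := fun u hu =>
    subset_convexHull ℝ _ (Set.mem_insert_iff.2 (Or.inr hu))
  have hu₀Δ'' : u₀ ∈ Δ'' := by
    rw [hmemΔ'']
    refine ⟨hSsubΓ u₀ hu₀S.1, fun y hy => ?_⟩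
    rw [hu₀h]
    exact hmin y hy
  have hface'' : Mixed.IsGammaPlusFace c Δ'' := by
    refine ⟨⟨⟨u₀, hu₀Δ''⟩, Or.inr ⟨hv, rfl⟩⟩, ?_⟩
    intro h0''
    have h1 := ((hmemΔ'' 0).1 h0'').2 u₀ (hSsubΓ u₀ hu₀S.1)
    rw [map_zero, hu₀h] at h1
    exact absurd (lt_of_le_of_lt h1 hmneg) (lt_irrefl _)
  -- the key equivalence
  have hkey : ∀ p : (Fin n → ℕ) × (Fin n → ℕ), c p ≠ 0 →
      (Mixed.suppPt p ∈ Δ'' ↔ (Mixed.suppPt p ∈ Δ ∧ Mixed.suppPt p ∈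
        {x ∈ Mixed.Gamma0 (Mixed.trunc c Δ) | ∀ y ∈ Mixed.Gamma0 (Mixed.trunc c Δ),
          ∑ i, b i * x i ≤ ∑ i, b i * y i})) := by
    intro p hp
    have hsS : Mixed.suppPt p ∈ Mixed.suppPts c :=
      ⟨p, Finsupp.mem_support_iff.2 hp, rfl⟩
    set s := Mixed.suppPt p with hs
    constructor
    · intro hsΔ''
      have h1 := (hmemΔ'' s).1 hsΔ''
      have h2 : MixedAux.lf hv s ≤ m := by
        rw [← hu₀h]
        exact h1.2 u₀ (hSsubΓ u₀ hu₀S.1)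
      obtain ⟨hsΔ, hsB⟩ := (hgen s (Set.mem_insert_iff.2 (Or.inr hsS))).2 h2
      refine ⟨hsΔ, ⟨hub s hsS hsΔ, fun y hy => ?_⟩⟩
      show MixedAux.lf b s ≤ MixedAux.lf b y
      rw [hsB]
      exact hx₀2 y hy
    · rintro ⟨hsΔ, hsΓ', hsmin⟩
      have hs0 : s ≠ 0 := by
        intro h
        refine h0' ?_
        rw [← h]
        exact ⟨hsΓ', hsmin⟩
      have hsB : MixedAux.lf b s = m := by
        have h1 : MixedAux.lf b s ≤ m := hsmin x₀ hx₀1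
        exact le_antisymm h1 (hx₀2 s hsΓ')
      have hsG : MixedAux.lf g s = 0 := (hgiff s (hsuppBar s hsS hs0)).2 hsΔ
      have hsh : MixedAux.lf hv s = m := by rw [hlf, hsG, hsB]; ring
      rw [hmemΔ'']
      refine ⟨hSsubΓ s hsS, fun y hy => ?_⟩
      rw [hsh]
      exact hmin y hy
  -- identification of the truncations
  have heqt : Mixed.trunc c Δ'' = Mixed.trunc (Mixed.trunc c Δ)
      {x ∈ Mixed.Gamma0 (Mixed.trunc c Δ) | ∀ y ∈ Mixed.Gamma0 (Mixed.trunc c Δ),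
        ∑ i, b i * x i ≤ ∑ i, b i * y i} := by
    ext p
    simp only [MixedAux.trunc_apply]
    by_cases hp : c p = 0
    · split_ifs <;> simp [hp]
    · have hk := hkey p hp
      split_ifs with h1 h2 h3 <;> tauto
  have hmain := hnd Δ'' hface'' z hz (by rw [heqt]; exact heval)
  rw [heqt] at hmain
  exact hmain


/-- Remark 3.10: if `f` is Newton non-degenerate then so is the truncation
`f_Δ` for every bad face `Δ` of `supp(f)‾`. -/
theorem trunc_nondeg_of_badFace {n : ℕ} (c : MixedCoeff n)
    (hnd : Mixed.NewtonNonDeg c) :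
    ∀ Δ : Set (Fin n → ℝ), Mixed.IsBadFace c Δ → Mixed.NewtonNonDeg (Mixed.trunc c Δ) :=
  trunc_nondeg_of_badFace' c hnd
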